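/- Let T₀ > 0 and η ∈ L²([0,T₀] × [0,T₀];ℝ). Then ∫₀^{T₀} ∫₀^{T₀} g(t,T)² dT dt ≤ (5T₀/2) · ∫₀^{T₀} ∫₀^{T₀} η(t,u)² du dt. -/

import Mathlib

open MeasureTheory Real Set

/-- The market price of risk: `λ(t,T) = ∫₀^T η(t,u) du`. -/
noncomputable def mpr (η : ℝ → ℝ → ℝ) (t T : ℝ) : ℝ := ∫ u in (0:ℝ)..T, η t u

/-- The integrand of the space-time Girsanov kernel:
`g(s,u) = λ(s,u)/(2√u) + √u·η(s,u)`. -/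
noncomputable def gker (η : ℝ → ℝ → ℝ) (s u : ℝ) : ℝ :=
  mpr η s u / (2 * Real.sqrt u) + Real.sqrt u * η s u

lemma sq_integral_le {α : Type*} [MeasurableSpace α] (μ : Measure α) [IsFiniteMeasure μ]
    {f : α → ℝ} (hf : MemLp f 2 μ) :
    (∫ a, f a ∂μ) ^ 2 ≤ (μ Set.univ).toReal * ∫ a, f a ^ 2 ∂μ := by
  have h2 : (ENNReal.ofReal (2:ℝ)) = 2 := by norm_num
  have hconj : (2:ℝ).HolderConjugate 2 := Real.holderConjugate_iff.mpr ⟨one_lt_two, by norm_num⟩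
  have hcs := integral_mul_le_Lp_mul_Lq_of_nonneg hconj
    (Filter.Eventually.of_forall (fun a => abs_nonneg (f a)))
    (Filter.Eventually.of_forall (fun _ : α => (zero_le_one : (0:ℝ) ≤ 1)))
    (by rw [h2]; exact hf.abs) (by rw [h2]; exact memLp_const 1)
  simp only [mul_one, one_rpow] at hcs
  have habs2 : ∀ a, |f a| ^ (2:ℝ) = f a ^ 2 := by
    intro a; rw [show ((2:ℝ)) = ((2:ℕ):ℝ) by norm_num, Real.rpow_natCast, sq_abs]
  simp only [habs2] at hcs
  have h1int : ∫ a, (1:ℝ) ∂μ = (μ Set.univ).toReal := by simp [measureReal_def]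
  rw [h1int] at hcs
  have hfa : |∫ a, f a ∂μ| ≤ ∫ a, |f a| ∂μ := by
    simpa using norm_integral_le_integral_norm (μ := μ) f
  have hA : (0:ℝ) ≤ ∫ a, f a ^ 2 ∂μ := integral_nonneg fun a => sq_nonneg _
  have hB : (0:ℝ) ≤ (μ Set.univ).toReal := ENNReal.toReal_nonneg
  calc (∫ a, f a ∂μ) ^ 2 = |∫ a, f a ∂μ| ^ 2 := (sq_abs _).symm
    _ ≤ (∫ a, |f a| ∂μ) ^ 2 := by
        apply pow_le_pow_left₀ (abs_nonneg _) hfa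
    _ ≤ ((∫ a, f a ^ 2 ∂μ) ^ (1/(2:ℝ)) * (μ Set.univ).toReal ^ (1/(2:ℝ))) ^ 2 := by
        apply pow_le_pow_left₀ (integral_nonneg fun a => abs_nonneg _) hcs
    _ = (μ Set.univ).toReal * ∫ a, f a ^ 2 ∂μ := by
        rw [mul_pow, ← Real.rpow_natCast (_ ^ (1/(2:ℝ))) 2, ← Real.rpow_natCast (_ ^ (1/(2:ℝ))) 2,
          ← Real.rpow_mul hA, ← Real.rpow_mul hB]
        norm_num [Real.rpow_one]
        ring

lemma inner_bound (T₀ : ℝ) (hT₀ : 0 < T₀) (η : ℝ → ℝ → ℝ) (t : ℝ)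
    (h1 : IntegrableOn (η t) (Ioc 0 T₀))
    (h2 : IntegrableOn (fun u => η t u ^ 2) (Ioc 0 T₀)) :
    ∫ T in Ioc (0:ℝ) T₀, gker η t T ^ 2
      ≤ (5 * T₀ / 2) * ∫ u in Ioc (0:ℝ) T₀, η t u ^ 2 := by
  set E := ∫ u in Ioc (0:ℝ) T₀, η t u ^ 2 with hEdef
  have hE0 : 0 ≤ E := setIntegral_nonneg measurableSet_Ioc fun _ _ => sq_nonneg _
  -- pointwise bound
  have key : ∀ T ∈ Ioc (0:ℝ) T₀, gker η t T ^ 2 ≤ E / 2 + 2 * T₀ * η t T ^ 2 := by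
    rintro T ⟨hT0, hTT₀⟩
    have hTpos : (0:ℝ) < T := hT0
    have hsq : Real.sqrt T ^ 2 = T := Real.sq_sqrt hTpos.le
    have hspos : 0 < Real.sqrt T := Real.sqrt_pos.mpr hTpos
    -- Cauchy–Schwarz for mpr
    have hfin : IsFiniteMeasure (volume.restrict (Ioc (0:ℝ) T)) := by
      constructor
      rw [Measure.restrict_apply_univ, Real.volume_Ioc]
      exact ENNReal.ofReal_lt_top
    have hsub : Ioc (0:ℝ) T ⊆ Ioc (0:ℝ) T₀ := Ioc_subset_Ioc le_rfl hTT₀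
    have h2T : IntegrableOn (fun u => η t u ^ 2) (Ioc 0 T) := h2.mono_set hsub
    have h1T : IntegrableOn (η t) (Ioc 0 T) := h1.mono_set hsub
    have hmem : MemLp (η t) 2 (volume.restrict (Ioc (0:ℝ) T)) :=
      (memLp_two_iff_integrable_sq h1T.1).mpr h2T
    have hcs := sq_integral_le (volume.restrict (Ioc (0:ℝ) T)) hmem
    rw [Measure.restrict_apply_univ, Real.volume_Ioc, sub_zero,
      ENNReal.toReal_ofReal hTpos.le] at hcs
    have hmprle : (∫ u in Ioc (0:ℝ) T, η t u ^ 2) ≤ E :=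
      setIntegral_mono_set h2
        (Filter.Eventually.of_forall fun u => sq_nonneg _)
        (HasSubset.Subset.eventuallyLE hsub)
    have hmpr : mpr η t T ^ 2 ≤ T * E := by
      have : mpr η t T = ∫ u in Ioc (0:ℝ) T, η t u :=
        intervalIntegral.integral_of_le hTpos.le
      rw [this]
      calc (∫ u in Ioc (0:ℝ) T, η t u) ^ 2 ≤ T * ∫ u in Ioc (0:ℝ) T, η t u ^ 2 := hcs
        _ ≤ T * E := by
            exact mul_le_mul_of_nonneg_left hmprle hTpos.le
    -- now the algebra
    set a := mpr η t T with ha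
    set e := η t T with he
    have expand : gker η t T ^ 2 ≤ 2 * (a / (2 * Real.sqrt T)) ^ 2 + 2 * (Real.sqrt T * e) ^ 2 := by
      unfold gker
      nlinarith [sq_nonneg (a / (2 * Real.sqrt T) - Real.sqrt T * e)]
    have hterm1 : 2 * (a / (2 * Real.sqrt T)) ^ 2 ≤ E / 2 := by
      have : (a / (2 * Real.sqrt T)) ^ 2 = a ^ 2 / (4 * T) := by
        rw [div_pow, mul_pow, hsq]; norm_num
      rw [this]
      have h4T : (0:ℝ) < 4 * T := by linarith
      calc 2 * (a ^ 2 / (4 * T)) ≤ 2 * ((T * E) / (4 * T)) := by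
            apply mul_le_mul_of_nonneg_left _ (by norm_num)
            exact div_le_div_of_nonneg_right hmpr h4T.le
        _ = E / 2 := by field_simp; ring
    have hterm2 : 2 * (Real.sqrt T * e) ^ 2 ≤ 2 * T₀ * e ^ 2 := by
      rw [mul_pow, hsq]
      nlinarith [sq_nonneg e]
    linarith
  -- integrate the bound
  have hBint : Integrable (fun T => E / 2 + 2 * T₀ * η t T ^ 2)
      (volume.restrict (Ioc (0:ℝ) T₀)) :=
    (integrable_const _).add (h2.const_mul _)
  have hle : (fun T => gker η t T ^ 2) ≤ᵐ[volume.restrict (Ioc (0:ℝ) T₀)]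
      fun T => E / 2 + 2 * T₀ * η t T ^ 2 :=
    (ae_restrict_iff' measurableSet_Ioc).mpr (Filter.Eventually.of_forall key)
  calc ∫ T in Ioc (0:ℝ) T₀, gker η t T ^ 2
      ≤ ∫ T in Ioc (0:ℝ) T₀, (E / 2 + 2 * T₀ * η t T ^ 2) :=
        integral_mono_of_nonneg (Filter.Eventually.of_forall fun T => sq_nonneg _) hBint hle
    _ = (5 * T₀ / 2) * E := by
        rw [integral_add (integrable_const _) (h2.const_mul _), setIntegral_const,
          integral_const_mul]
        rw [Real.volume_real_Ioc, sub_zero, max_eq_left hT₀.le, smul_eq_mul, ← hEdef]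
        ring

/-- For `η ∈ L²([0,T₀]²)`,
`∫₀^{T₀}∫₀^{T₀} g(t,T)² dT dt ≤ (5T₀/2)·∫₀^{T₀}∫₀^{T₀} η(t,u)² du dt`. -/
theorem stmt4 (T₀ : ℝ) (hT₀ : 0 < T₀) (η : ℝ → ℝ → ℝ)
    (hη : MemLp (Function.uncurry η) 2
      (volume.restrict (Ioc (0:ℝ) T₀ ×ˢ Ioc (0:ℝ) T₀))) :
    ∫ t in Ioc (0:ℝ) T₀, ∫ T in Ioc (0:ℝ) T₀, (gker η t T) ^ 2
      ≤ (5 * T₀ / 2) * ∫ t in Ioc (0:ℝ) T₀, ∫ u in Ioc (0:ℝ) T₀, η t u ^ 2 := by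
  have hms : MeasurableSet (Ioc (0:ℝ) T₀) := measurableSet_Ioc
  haveI hfin : IsFiniteMeasure (volume.restrict (Ioc (0:ℝ) T₀)) := by
    constructor
    rw [Measure.restrict_apply_univ, Real.volume_Ioc]
    exact ENNReal.ofReal_lt_top
  have hprod : volume.restrict (Ioc (0:ℝ) T₀ ×ˢ Ioc (0:ℝ) T₀)
      = (volume.restrict (Ioc (0:ℝ) T₀)).prod (volume.restrict (Ioc (0:ℝ) T₀)) := by
    rw [Measure.prod_restrict, ← Measure.volume_eq_prod]
  rw [hprod] at hη
  have hη2 : Integrable (fun p : ℝ × ℝ => η p.1 p.2 ^ 2)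
      ((volume.restrict (Ioc (0:ℝ) T₀)).prod (volume.restrict (Ioc (0:ℝ) T₀))) := by
    simpa [Function.uncurry] using hη.integrable_sq
  have hη1 : Integrable (Function.uncurry η)
      ((volume.restrict (Ioc (0:ℝ) T₀)).prod (volume.restrict (Ioc (0:ℝ) T₀))) :=
    hη.integrable one_le_two
  have hsec2 := hη2.prod_right_ae
  have hsec1 := hη1.prod_right_ae
  have hGint : Integrable (fun t => ∫ u in Ioc (0:ℝ) T₀, η t u ^ 2)
      (volume.restrict (Ioc (0:ℝ) T₀)) := hη2.integral_prod_left
  have hle : (fun t => ∫ T in Ioc (0:ℝ) T₀, gker η t T ^ 2)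
      ≤ᵐ[volume.restrict (Ioc (0:ℝ) T₀)]
      fun t => (5 * T₀ / 2) * ∫ u in Ioc (0:ℝ) T₀, η t u ^ 2 := by
    filter_upwards [hsec1, hsec2] with t h1 h2
    exact inner_bound T₀ hT₀ η t h1 h2
  calc ∫ t in Ioc (0:ℝ) T₀, ∫ T in Ioc (0:ℝ) T₀, gker η t T ^ 2
      ≤ ∫ t in Ioc (0:ℝ) T₀, ((5 * T₀ / 2) * ∫ u in Ioc (0:ℝ) T₀, η t u ^ 2) :=
        integral_mono_of_nonneg
          (Filter.Eventually.of_forall fun t =>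
            setIntegral_nonneg hms fun _ _ => sq_nonneg _)
          (hGint.const_mul _) hle
    _ = (5 * T₀ / 2) * ∫ t in Ioc (0:ℝ) T₀, ∫ u in Ioc (0:ℝ) T₀, η t u ^ 2 :=
        integral_const_mul _ _
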